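/- For L > 0 and n ∈ ℤ define ψ_n^L(x) := (2L)^{−1/2}·χ_{[−L,L]}(x)·e^{iπnx/L}, and let 𝓕ψ_n^L be its Fourier transform, (𝓕ψ_n^L)(k) = (2π)^{−1/2} ∫_ℝ e^{−ikx} ψ_n^L(x) dx. Then for every ε ≥ 0 and every L > 0 one has (1/(2L))·∑_{n∈ℤ} ∫_0^ε |(𝓕ψ_n^L)(k)|² dk = ε/(2π). Equivalently, the local density of states of the momentum operator p = −i d/dx on [−L, L] equals the constant 1/(2π), so the integrated density of states is 𝒩^p_L(ε) = ε/(2π) independently of L. -/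

import Mathlib

open MeasureTheory

/-- The local Fourier basis function `ψ_n^L(x) = (2L)^{-1/2} χ_{[-L,L]}(x) e^{iπnx/L}`. -/
noncomputable def psiL (L : ℝ) (n : ℤ) (x : ℝ) : ℂ :=
  ((Real.sqrt (2 * L))⁻¹ : ℝ) * (if x ∈ Set.Icc (-L) L then (1 : ℂ) else 0) *
    Complex.exp (Complex.I * Real.pi * (n : ℂ) * (x : ℂ) / (L : ℂ))

/-- Its Fourier transform `(𝓕ψ_n^L)(k) = (2π)^{-1/2} ∫ e^{-ikx} ψ_n^L(x) dx`. -/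
noncomputable def psiLhat (L : ℝ) (n : ℤ) (k : ℝ) : ℂ :=
  ((Real.sqrt (2 * Real.pi))⁻¹ : ℝ) *
    ∫ x : ℝ, Complex.exp (-Complex.I * (k : ℂ) * (x : ℂ)) * psiL L n x

lemma psiL_measurable (L : ℝ) (n : ℤ) : Measurable (psiL L n) := by
  unfold psiL
  apply Measurable.mul
  · apply Measurable.mul measurable_const
    exact Measurable.ite measurableSet_Icc measurable_const measurable_const
  · fun_prop

lemma psiLhat_sm (L : ℝ) (n : ℤ) : StronglyMeasurable (fun k => psiLhat L n k) := by
  unfold psiLhat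
  apply StronglyMeasurable.mul stronglyMeasurable_const
  apply MeasureTheory.StronglyMeasurable.integral_prod_right'
    (f := fun p : ℝ × ℝ => Complex.exp (-Complex.I * (p.1 : ℂ) * (p.2 : ℂ)) * psiL L n p.2)
  apply Measurable.stronglyMeasurable
  apply Measurable.mul
  · fun_prop
  · exact (psiL_measurable L n).comp measurable_snd

/-- The common interval integral appearing in both Fourier expressions. -/
noncomputable def Jint (L : ℝ) (n : ℤ) (k : ℝ) : ℂ :=
  ∫ x in (-L)..L, Complex.exp (Complex.I * Real.pi * (n : ℂ) * (x : ℂ) / (L : ℂ)) *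
    Complex.exp (-Complex.I * (k : ℂ) * (x : ℂ))

lemma psiLhat_eq (L : ℝ) (hL : 0 < L) (n : ℤ) (k : ℝ) :
    psiLhat L n k = ((Real.sqrt (2 * Real.pi))⁻¹ : ℝ) * (((Real.sqrt (2 * L))⁻¹ : ℝ) *
      Jint L n k) := by
  unfold psiLhat
  congr 1
  have h1 : (fun x : ℝ => Complex.exp (-Complex.I * (k : ℂ) * (x : ℂ)) * psiL L n x)
      = Set.indicator (Set.Icc (-L) L)
        (fun x : ℝ => ((Real.sqrt (2 * L))⁻¹ : ℝ) *
          (Complex.exp (Complex.I * Real.pi * (n : ℂ) * (x : ℂ) / (L : ℂ)) *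
            Complex.exp (-Complex.I * (k : ℂ) * (x : ℂ)))) := by
    funext x
    rw [Set.indicator_apply]
    unfold psiL
    split_ifs with h
    · ring
    · simp
  rw [h1, MeasureTheory.integral_indicator measurableSet_Icc,
    MeasureTheory.integral_Icc_eq_integral_Ioc,
    ← intervalIntegral.integral_of_le (by linarith : -L ≤ L),
    intervalIntegral.integral_const_mul]
  rfl

lemma fourierCoeff_eq (L : ℝ) (hL : 0 < L) (k : ℝ) (n : ℤ) :
    haveI : Fact (0 < 2 * L) := ⟨by linarith⟩
    fourierCoeff (AddCircle.liftIoc (2*L) (-L)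
        (fun x : ℝ => Complex.exp (-Complex.I * (k : ℂ) * (x : ℂ)))) (-n)
      = (((2*L : ℝ))⁻¹ : ℂ) * Jint L n k := by
  haveI : Fact (0 < 2 * L) := ⟨by linarith⟩
  rw [fourierCoeff_liftIoc_eq, fourierCoeffOn_eq_integral]
  simp only [fourier_coe_apply, neg_neg, smul_eq_mul]
  rw [show -L + 2*L = L by ring]
  rw [show L - -L = 2*L by ring]
  rw [show (1 : ℝ)/(2*L) = (2*L)⁻¹ by ring]
  rw [Complex.real_smul, Complex.ofReal_inv]
  have hL' : (L : ℂ) ≠ 0 := by exact_mod_cast hL.ne'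
  congr 1
  unfold Jint
  refine intervalIntegral.integral_congr fun x _ => ?_
  rw [← Complex.exp_add, ← Complex.exp_add]
  congr 1
  field_simp
  push_cast
  ring

set_option maxHeartbeats 2000000 in
lemma hasSum_psiLhat (L : ℝ) (hL : 0 < L) (k : ℝ) :
    HasSum (fun n : ℤ => ‖psiLhat L n k‖ ^ 2) (L / Real.pi) := by
  haveI : Fact (0 < 2 * L) := ⟨by linarith⟩
  have hπ := Real.pi_pos
  set g : ℝ → ℂ := fun x : ℝ => Complex.exp (-Complex.I * (k : ℂ) * (x : ℂ)) with hg
  set G := AddCircle.liftIoc (2*L) (-L) g with hGdef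
  have hGm : Measurable G := by
    have hgm : Measurable g := by fun_prop
    exact hgm.comp (measurable_subtype_coe.comp
      (AddCircle.measurableEquivIoc (2*L) (-L)).measurable)
  have hGnorm : ∀ t, ‖G t‖ = 1 := by
    intro t
    show ‖g _‖ = 1
    rw [hg]
    simp [Complex.norm_exp]
  have hG2 : MemLp G 2 AddCircle.haarAddCircle :=
    MemLp.of_bound hGm.aestronglyMeasurable 1 (.of_forall fun t => (hGnorm t).le)
  set F := hG2.toLp G with hF
  have hcoeff : ∀ i : ℤ, fourierCoeff (F : AddCircle (2*L) → ℂ) i = fourierCoeff G i := by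
    intro i
    unfold fourierCoeff
    apply integral_congr_ae
    filter_upwards [hG2.coeFn_toLp] with t ht
    rw [ht]
  have hnormF : ∫ t, ‖(F : AddCircle (2*L) → ℂ) t‖ ^ 2 ∂AddCircle.haarAddCircle = 1 := by
    have h1 : ∫ t, ‖(F : AddCircle (2*L) → ℂ) t‖ ^ 2 ∂AddCircle.haarAddCircle
        = ∫ _t, (1:ℝ) ∂(AddCircle.haarAddCircle (T := 2*L)) := by
      apply integral_congr_ae
      filter_upwards [hG2.coeFn_toLp] with t ht
      rw [ht, hGnorm t]; norm_num
    rw [h1]; simp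
  have hPar : ∑' i : ℤ, ‖fourierCoeff G i‖ ^ 2 = 1 := by
    calc ∑' i : ℤ, ‖fourierCoeff G i‖ ^ 2
        = ∑' i : ℤ, ‖fourierCoeff (F : AddCircle (2*L) → ℂ) i‖ ^ 2 := by simp_rw [hcoeff]
      _ = 1 := by rw [tsum_sq_fourierCoeff F, hnormF]
  have hsummable : Summable (fun i : ℤ => ‖fourierCoeff G i‖ ^ 2) := by
    by_contra h
    rw [tsum_eq_zero_of_not_summable h] at hPar; norm_num at hPar
  have hHS : HasSum (fun i : ℤ => ‖fourierCoeff G i‖ ^ 2) 1 := hPar ▸ hsummable.hasSum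
  have hHS2 : HasSum (fun n : ℤ => ‖fourierCoeff G (-n)‖ ^ 2) 1 :=
    (Equiv.neg ℤ).hasSum_iff.mpr hHS
  have hrel : ∀ n : ℤ, ‖psiLhat L n k‖ ^ 2 = (L / Real.pi) * ‖fourierCoeff G (-n)‖ ^ 2 := by
    intro n
    rw [psiLhat_eq L hL n k, hGdef, hg, fourierCoeff_eq L hL k n]
    rw [norm_mul, norm_mul, norm_mul, mul_pow, mul_pow, mul_pow]
    have s1 : ‖(((Real.sqrt (2*Real.pi))⁻¹ : ℝ) : ℂ)‖ ^ 2 = (2*Real.pi)⁻¹ := by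
      rw [Complex.norm_real, Real.norm_eq_abs, abs_inv,
        abs_of_nonneg (Real.sqrt_nonneg _), inv_pow, Real.sq_sqrt (by positivity)]
    have s2 : ‖(((Real.sqrt (2*L))⁻¹ : ℝ) : ℂ)‖ ^ 2 = (2*L)⁻¹ := by
      rw [Complex.norm_real, Real.norm_eq_abs, abs_inv,
        abs_of_nonneg (Real.sqrt_nonneg _), inv_pow, Real.sq_sqrt (by positivity)]
    have s3 : ‖(((2*L : ℝ)) : ℂ)⁻¹‖ ^ 2 = ((2*L)^2)⁻¹ := by
      rw [norm_inv, Complex.norm_real, Real.norm_eq_abs, abs_of_pos (by linarith), inv_pow]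
    rw [s1, s2, s3]
    field_simp
  have hfin : HasSum (fun n : ℤ => (L / Real.pi) * ‖fourierCoeff G (-n)‖ ^ 2)
      ((L / Real.pi) * 1) := hHS2.mul_left _
  rw [mul_one] at hfin
  simp_rw [← hrel] at hfin
  exact hfin

/-- the integrated density of states of the momentum operator on `[-L,L]`
is `𝒩^p_L(ε) = ε/(2π)`, independently of `L`:
`(1/(2L)) ∑_{n ∈ ℤ} ∫_0^ε |(𝓕ψ_n^L)(k)|² dk = ε/(2π)`. -/
theorem IDOS_momentum (L : ℝ) (hL : 0 < L) (ε : ℝ) (hε : 0 ≤ ε) :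
    (1 / (2 * L)) * ∑' n : ℤ, (∫ k in (0 : ℝ)..ε, ‖psiLhat L n k‖ ^ 2)
      = ε / (2 * Real.pi) := by
  have hπ := Real.pi_pos
  set μ := volume.restrict (Set.Ioc (0:ℝ) ε) with hμ
  have meas : ∀ n : ℤ, AEStronglyMeasurable (fun k => ‖psiLhat L n k‖ ^ 2) μ := fun n =>
    (((psiLhat_sm L n).measurable.norm.pow_const 2).aestronglyMeasurable)
  have hnn : ∀ n (kk : ℝ), (‖(‖psiLhat L n kk‖ ^ 2 : ℝ)‖₊ : ℝ) = ‖psiLhat L n kk‖ ^ 2 := by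
    intro n kk
    rw [coe_nnnorm, Real.norm_eq_abs, abs_of_nonneg (by positivity)]
  have htsum_nn : ∀ kk : ℝ, (∑' n : ℤ, (‖(‖psiLhat L n kk‖ ^ 2 : ℝ)‖₊ : ENNReal))
      = ENNReal.ofReal (L / Real.pi) := by
    intro kk
    have h1 : HasSum (fun n : ℤ => (‖(‖psiLhat L n kk‖ ^ 2 : ℝ)‖₊ : NNReal))
        (NNReal.mk (L / Real.pi) (by positivity)) := by
      rw [← NNReal.hasSum_coe]
      convert hasSum_psiLhat L hL kk using 1
      funext n
      exact hnn n kk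
      rfl
    rw [ENNReal.tsum_coe_eq h1, ENNReal.ofReal]
    congr 1
    simp [Real.toNNReal, max_eq_left (by positivity : (0:ℝ) ≤ L / Real.pi)]
  have hfin : (∑' n : ℤ, ∫⁻ kk, ‖(fun k => ‖psiLhat L n k‖ ^ 2) kk‖₊ ∂μ) ≠ ⊤ := by
    rw [← MeasureTheory.lintegral_tsum (fun n => ((meas n).aemeasurable.nnnorm.coe_nnreal_ennreal))]
    calc ∫⁻ kk, ∑' n : ℤ, (‖(‖psiLhat L n kk‖ ^ 2 : ℝ)‖₊ : ENNReal) ∂μ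
        = ∫⁻ _kk, ENNReal.ofReal (L / Real.pi) ∂μ := by
          apply lintegral_congr
          intro kk; exact htsum_nn kk
      _ = ENNReal.ofReal (L / Real.pi) * μ Set.univ := by rw [lintegral_const]
      _ ≠ ⊤ := by
          rw [hμ, Measure.restrict_apply_univ, Real.volume_Ioc]
          exact ENNReal.mul_ne_top ENNReal.ofReal_ne_top ENNReal.ofReal_ne_top
  have swap := MeasureTheory.integral_tsum (μ := μ) (f := fun n k => ‖psiLhat L n k‖ ^ 2)
    meas hfin
  have lhs1 : ∑' n : ℤ, (∫ k in (0 : ℝ)..ε, ‖psiLhat L n k‖ ^ 2)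
      = ∑' n : ℤ, ∫ k, ‖psiLhat L n k‖ ^ 2 ∂μ := by
    congr 1
    funext n
    rw [intervalIntegral.integral_of_le hε, hμ]
  rw [lhs1, ← swap]
  have lhs2 : ∫ k, (∑' n : ℤ, ‖psiLhat L n k‖ ^ 2) ∂μ = ∫ _k, (L / Real.pi) ∂μ := by
    apply integral_congr_ae
    filter_upwards with kk
    exact (hasSum_psiLhat L hL kk).tsum_eq
  rw [lhs2, integral_const, hμ, measureReal_def, Measure.restrict_apply_univ, Real.volume_Ioc,
    ENNReal.toReal_ofReal (by linarith), smul_eq_mul]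
  field_simp
  ring
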